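/- For every natural number m, a(m) ≤ h(m). -/

import Mathlib

private def mnat : ℕ → ℕ
  | 0 => 0
  | 1 => 1
  | n+2 => mnat (n+1) + 2 * mnat n


private lemma mnat_pos (n : ℕ) : 1 ≤ mnat (n+1) := by
  induction n using Nat.strong_induction_on with
  | _ n ih =>
    match n with
    | 0 => simp [mnat]
    | m+1 =>
      have := ih m (by omega)
      simp [mnat]; omega

private lemma malt (n : ℕ) : ((mnat (n+1) : ℝ)) = 2 * (mnat n : ℝ) + (-1)^n := by
  induction n with
  | zero => simp [mnat]
  | succ m ihm =>
    have h2 : ((mnat (m+2) : ℝ)) = (mnat (m+1) : ℝ) + 2 * (mnat m : ℝ) := by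
      have : mnat (m+2) = mnat (m+1) + 2 * mnat m := rfl
      rw [this]; push_cast; ring
    rw [h2, pow_succ]
    linear_combination (-1 : ℝ)*ihm

private lemma mnat_le_succ (n : ℕ) : mnat (n+1) ≤ mnat (n+2) := by
  have : mnat (n+2) = mnat (n+1) + 2 * mnat n := rfl
  omega

private lemma mnat_mono {i j : ℕ} (h : i ≤ j) : mnat (i+1) ≤ mnat (j+1) := by
  induction j, h using Nat.le_induction with
  | base => exact le_refl _
  | succ m hm ih => exact le_trans ih (mnat_le_succ m)

private lemma fib32 (n : ℕ) : 3 * Nat.fib (n+2) ≤ 2 * Nat.fib (n+3) := by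
  induction n using Nat.strong_induction_on with
  | _ n ih =>
    match n with
    | 0 => decide
    | 1 => decide
    | m+2 =>
      show 3 * Nat.fib (m+4) ≤ 2 * Nat.fib (m+5)
      have h1 : 3 * Nat.fib (m+2) ≤ 2 * Nat.fib (m+3) := ih m (by omega)
      have h2 : 3 * Nat.fib (m+3) ≤ 2 * Nat.fib (m+4) := ih (m+1) (by omega)
      have e1 : Nat.fib (m+4) = Nat.fib (m+2) + Nat.fib (m+3) := Nat.fib_add_two
      have e2 : Nat.fib (m+5) = Nat.fib (m+3) + Nat.fib (m+4) := Nat.fib_add_two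
      omega

private lemma fib_le_mnat (n : ℕ) : Nat.fib n ≤ mnat n := by
  induction n using Nat.strong_induction_on with
  | _ n ih =>
    match n with
    | 0 => decide
    | 1 => decide
    | m+2 =>
      have h1 : Nat.fib m ≤ mnat m := ih m (by omega)
      have h2 : Nat.fib (m+1) ≤ mnat (m+1) := ih (m+1) (by omega)
      have e1 : Nat.fib (m+2) = Nat.fib m + Nat.fib (m+1) := Nat.fib_add_two
      have e2 : mnat (m+2) = mnat (m+1) + 2 * mnat m := rfl
      omega

-- W lemma: for i ≥ 4 : 3*fib i + 6*mnat i * fib i ≤ 4 * mnat i * fib (i+1)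
private lemma fibW (i : ℕ) (hi : 4 ≤ i) :
    3 * Nat.fib i + 6 * mnat i * Nat.fib i ≤ 4 * mnat i * Nat.fib (i+1) := by
  match i, hi with
  | 4, _ => decide
  | (j+5), _ =>
    -- 2*fib(j+6) = 3*fib(j+5) + fib(j+2)
    have id1 : 2 * Nat.fib (j+6) = 3 * Nat.fib (j+5) + Nat.fib (j+2) := by
      have e1 : Nat.fib (j+6) = Nat.fib (j+4) + Nat.fib (j+5) := Nat.fib_add_two
      have e2 : Nat.fib (j+5) = Nat.fib (j+3) + Nat.fib (j+4) := Nat.fib_add_two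
      have e3 : Nat.fib (j+4) = Nat.fib (j+2) + Nat.fib (j+3) := Nat.fib_add_two
      omega
    have h5 : Nat.fib (j+5) ≤ 5 * Nat.fib (j+2) := by
      have e2 : Nat.fib (j+5) = Nat.fib (j+3) + Nat.fib (j+4) := Nat.fib_add_two
      have e3 : Nat.fib (j+4) = Nat.fib (j+2) + Nat.fib (j+3) := Nat.fib_add_two
      have e4 : Nat.fib (j+3) = Nat.fib (j+1) + Nat.fib (j+2) := Nat.fib_add_two
      have e5 : Nat.fib (j+1) ≤ Nat.fib (j+2) := Nat.fib_le_fib_succ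
      omega
    have hm : 11 ≤ mnat (j+5) := by
      have h1 : mnat 5 ≤ mnat (j+5) := mnat_mono (by omega)
      have h2 : mnat 5 = 11 := by simp [mnat]
      omega
    nlinarith [Nat.fib_pos.mpr (show 0 < j+2 by omega)]

private lemma fraclem (A1 B1 D1 A2 B2 D2 A3 B3 D3 : ℝ)
    (hD1 : 0 < D1) (hD2 : 0 < D2) (hD3 : 0 < D3)
    (key : B1*(D2*D3) + B2*(D1*D3) + (A1+A2-A3)*(D1*(D2*D3)) ≤ B3*(D1*D2)) :
    (A1 + B1/D1) + (A2 + B2/D2) ≤ A3 + B3/D3 := by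
  rw [← sub_nonneg]
  have h : A3 + B3/D3 - ((A1 + B1/D1) + (A2 + B2/D2))
      = (B3*(D1*D2) - (B1*(D2*D3) + B2*(D1*D3) + (A1+A2-A3)*(D1*(D2*D3))))
        / (D1*(D2*D3)) := by
    field_simp
    ring
  rw [h]
  exact div_nonneg (by linarith) (le_of_lt (mul_pos hD1 (mul_pos hD2 hD3)))

private lemma keyB2 (t u f g e : ℝ) (hu : 1 ≤ u) (hf : 1 ≤ f) (hfg : f ≤ g)
    (hg2 : g ≤ 2*f) (he : e = 1 ∨ e = -1) (hA : e = -1 ∨ 3*f ≤ 2*g)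
    (ht1 : 2*u+e ≤ t) (ht2 : t ≤ 4*u+e-1) :
    (g + f*((t+1) - (2*u+e))/(2*u)) + ((f+g) + g*((2*t+1) - (4*u+e))/(2*(2*u+e)))
      ≤ (f+2*g) + (f+g)*((4*t+3) - (8*u+3*e))/(2*(4*u+e)) := by
  have he1 : -1 ≤ e := by rcases he with rfl|rfl <;> norm_num
  have he2 : e ≤ 1 := by rcases he with rfl|rfl <;> norm_num
  apply fraclem _ _ _ _ _ _ _ _ _ (by linarith) (by linarith) (by linarith)
  rcases he with rfl|rfl
  · have h32 : 3*f ≤ 2*g := by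
      rcases hA with h|h
      · norm_num at h
      · exact h
    have c1 : 0 ≤ t - 2*u := by linarith
    have c2 : 0 ≤ 2*u*(g-f) - f := by nlinarith
    nlinarith [mul_nonneg c1 c2]
  · have c1 : 0 ≤ 4*u-2 - t := by linarith
    have c2 : 0 ≤ f + 2*u*(g-f) := by nlinarith
    nlinarith [mul_nonneg c1 c2]

private lemma keyB1b (t u f g e : ℝ) (hu : 1 ≤ u) (hf : 1 ≤ f) (hfg : f ≤ g)
    (hg2 : g ≤ 2*f) (he : e = 1 ∨ e = -1)
    (hB : e = 1 → 3*f + 6*u*f ≤ 4*u*g)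
    (hA : e = -1 → (u = 1 ∨ 3*f ≤ 2*g))
    (ht1 : 2*u+e ≤ t) (ht2 : t ≤ 4*u+e-1) :
    (2*(f+g) + (2*g)*((2*t+1) - (4*u+e))/(2*(2*u+e))) + (g + f*((t+1) - (2*u+e))/(2*u))
      ≤ (2*f+3*g) + (f+2*g)*((8*t+5) - (16*u+5*e))/(2*(8*u+3*e)) := by
  have he1 : -1 ≤ e := by rcases he with rfl|rfl <;> norm_num
  have he2 : e ≤ 1 := by rcases he with rfl|rfl <;> norm_num
  apply fraclem _ _ _ _ _ _ _ _ _ (by linarith) (by linarith) (by linarith)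
  rcases he with rfl|rfl
  · have hB' := hB rfl
    have c1 : 0 ≤ t - 2*u := by linarith
    have c2 : 0 ≤ 4*u*g - 6*u*f - 3*f := by linarith
    nlinarith [mul_nonneg c1 c2]
  · have c1 : 0 ≤ 4*u-2 - t := by linarith
    have c2 : 0 ≤ 3*f + 2*u*(2*g-3*f) := by
      rcases hA rfl with rfl|h
      · linarith
      · nlinarith
    nlinarith [mul_nonneg c1 c2]

private lemma keyA0a (t u f g e : ℝ) (hu : 1 ≤ u) (hf : 1 ≤ f) (hfg : f ≤ g)
    (hg2 : g ≤ 2*f) (he : e = 1 ∨ e = -1)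
    (ht1 : 2*u+e ≤ t) (ht2 : t ≤ 4*u+e-1) (hbr : 8*t+1 ≤ 16*u+5*e) :
    (g + f*(t - (2*u+e))/(2*u)) + ((f+2*g) + (f+g)*((4*t+1) - (8*u+3*e))/(2*(4*u+e)))
      ≤ (f+2*g) + (f+g)*((8*t+1) - (8*u+3*e))/(2*(4*u+e)) := by
  have hu0 : (0:ℝ) ≤ u := by linarith
  have hf0 : (0:ℝ) ≤ f := by linarith
  have hg0 : (0:ℝ) ≤ g := by linarith
  have hgf0 : (0:ℝ) ≤ g - f := by linarith
  have h2fg0 : (0:ℝ) ≤ 2*f - g := by linarith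
  have hum1 : (0:ℝ) ≤ u - 1 := by linarith
  have he1 : -1 ≤ e := by rcases he with rfl|rfl <;> norm_num
  have he2 : e ≤ 1 := by rcases he with rfl|rfl <;> norm_num
  apply fraclem _ _ _ _ _ _ _ _ _ (by linarith) (by linarith) (by linarith)
  rcases he with rfl|rfl
  · linarith
  · have c1 : 0 ≤ t - (2*u-1) := by linarith
    have cβ : 0 ≤ -4*f - 16*u*g + 16*u*f + 64*u^2*g := by nlinarith [mul_nonneg hum1 hf0, mul_nonneg (mul_nonneg hu0 hum1) hg0, mul_nonneg (mul_nonneg hu0 hu0) hg0, mul_nonneg hu0 hg0]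
    have c2 : 0 ≤ 2*f*(2*u-1) - g := by nlinarith
    have c3 : 0 ≤ 8*u*(4*u-1) := by nlinarith
    nlinarith [mul_nonneg c1 cβ, mul_nonneg c3 c2]

private lemma keyA0b (t u f g e : ℝ) (hu : 1 ≤ u) (hf : 1 ≤ f) (hfg : f ≤ g)
    (hg2 : g ≤ 2*f) (he : e = 1 ∨ e = -1)
    (ht1 : 2*u+e ≤ t) (ht2 : t ≤ 4*u+e-1) (hbr : 16*u+5*e ≤ 8*t+1) :
    (g + f*(t - (2*u+e))/(2*u)) + ((f+2*g) + (f+g)*((4*t+1) - (8*u+3*e))/(2*(4*u+e)))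
      ≤ (2*f+3*g) + (f+2*g)*((8*t+1) - (16*u+5*e))/(2*(8*u+3*e)) := by
  have hu0 : (0:ℝ) ≤ u := by linarith
  have hf0 : (0:ℝ) ≤ f := by linarith
  have hg0 : (0:ℝ) ≤ g := by linarith
  have hgf0 : (0:ℝ) ≤ g - f := by linarith
  have h2fg0 : (0:ℝ) ≤ 2*f - g := by linarith
  have hum1 : (0:ℝ) ≤ u - 1 := by linarith
  have he1 : -1 ≤ e := by rcases he with rfl|rfl <;> norm_num
  have he2 : e ≤ 1 := by rcases he with rfl|rfl <;> norm_num
  apply fraclem _ _ _ _ _ _ _ _ _ (by linarith) (by linarith) (by linarith)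
  have cu2 : 1 ≤ u^2 := by nlinarith
  have cu3 : 1 ≤ u^3 := by nlinarith
  rcases he with rfl|rfl
  · -- two-point: (4u - t) * Pbr + (8t+1-(16u+5)) * Phi/8 style
    have clo : 0 ≤ 8*t+1 - (16*u+5) := by linarith
    have chi : 0 ≤ 4*u - t := by linarith
    have hPbr : 0 ≤ 6*f + 64*u*f + 224*u^2*f + 256*u^3*f := by positivity
    have hPhi : 0 ≤ 12*f - 8*u*g + 88*u*f - 32*u^2*g + 96*u^2*f + 256*u^3*g := by
      nlinarith [mul_nonneg (mul_nonneg hu0 hu0) h2fg0, mul_nonneg hu0 h2fg0, mul_nonneg (mul_nonneg hu0 hu0) hg0]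
    nlinarith [mul_nonneg chi hPbr, mul_nonneg clo hPhi]
  · have clo : 0 ≤ 8*t+1 - (16*u-5) := by linarith
    have chi : 0 ≤ 4*u-2 - t := by linarith
    have hPbr : 0 ≤ -3*f + 12*u*g + 56*u*f - 32*u^2*g - 224*u^2*f + 256*u^3*f := by
      nlinarith [mul_nonneg (mul_nonneg hum1 hum1) hf0, mul_nonneg hum1 hf0,
        mul_nonneg (mul_nonneg hum1 hum1) (mul_nonneg hum1 hf0),
        mul_nonneg (mul_nonneg hu0 hu0) (mul_nonneg hu0 h2fg0),
        mul_nonneg (mul_nonneg hu0 hu0) h2fg0, mul_nonneg hu0 h2fg0]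
    have hPhi : 0 ≤ 12*f + 32*u*g - 88*u*f - 224*u^2*g + 128*u^2*f + 256*u^3*g := by
      nlinarith [mul_nonneg (mul_nonneg hum1 hum1) hg0, mul_nonneg hum1 hg0,
        mul_nonneg (mul_nonneg hum1 hum1) (mul_nonneg hum1 hg0),
        mul_nonneg (mul_nonneg hum1 hum1) hf0, mul_nonneg hum1 hf0,
        mul_nonneg hum1 hgf0, mul_nonneg (mul_nonneg hum1 hum1) hgf0]
    nlinarith [mul_nonneg chi hPbr, mul_nonneg clo hPhi]


private lemma locate (s : ℕ) (hs : 1 ≤ s) : ∃ n, mnat (n+2) ≤ s ∧ s < mnat (n+3) := by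
  induction s with
  | zero => omega
  | succ m ihm =>
    by_cases hm : m = 0
    · subst hm
      refine ⟨0, ?_, ?_⟩ <;> simp [mnat]
    · obtain ⟨n, h1, h2⟩ := ihm (by omega)
      by_cases hlt : m+1 < mnat (n+3)
      · exact ⟨n, by omega, hlt⟩
      · refine ⟨n+1, ?_, ?_⟩
        · show mnat (n+3) ≤ m+1
          omega
        · show m+1 < mnat (n+4)
          have e : mnat (n+4) = mnat (n+3) + 2*mnat (n+2) := rfl
          have hp : 1 ≤ mnat (n+2) := mnat_pos (n+1)
          omega

set_option maxHeartbeats 1000000 in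
/-- For every natural number `m`, `a(m) ≤ h(m)`, where `a` is Stern's sequence and
`h` the piecewise linear function through `(0,0)` and `(m_n, F_n)`. -/
theorem stern_le_h
    (a : ℕ → ℕ) (ha0 : a 0 = 0) (ha1 : a 1 = 1)
    (haeven : ∀ n, 1 ≤ n → a (2 * n) = a n)
    (haodd : ∀ n, 1 ≤ n → a (2 * n + 1) = a n + a (n + 1))
    (M : ℕ → ℝ) (hM : ∀ n : ℕ, M n = (2 ^ n - (-1) ^ n) / 3)
    (h : ℝ → ℝ)
    (h01 : ∀ x ∈ Set.Icc (0 : ℝ) 1, h x = x)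
    (hlin : ∀ n : ℕ, 2 ≤ n → ∀ x ∈ Set.Icc (M n) (M (n + 1)),
      h x = (Nat.fib n : ℝ) +
        ((Nat.fib (n + 1) : ℝ) - (Nat.fib n : ℝ)) * (x - M n) / (M (n + 1) - M n)) :
    ∀ k : ℕ, (a k : ℝ) ≤ h k := by
  have Mrec : ∀ j : ℕ, M (j+2) = M (j+1) + 2 * M j := by
    intro j; rw [hM, hM, hM]; simp only [pow_succ]; ring
  have castM : ∀ j : ℕ, M j = (mnat j : ℝ) := by
    intro j
    induction j using Nat.strong_induction_on with
    | _ j ih =>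
      match j with
      | 0 => rw [hM]; norm_num [mnat]
      | 1 => rw [hM]; norm_num [mnat]
      | j+2 =>
        rw [Mrec j, ih (j+1) (by omega), ih j (by omega)]
        have e : mnat (j+2) = mnat (j+1) + 2 * mnat j := rfl
        rw [e]; push_cast; ring
  have heval : ∀ (n : ℕ) (x : ℝ), (mnat (n+2) : ℝ) ≤ x → x ≤ (mnat (n+3) : ℝ) →
      h x = (Nat.fib (n+2) : ℝ) + (Nat.fib (n+1) : ℝ) * (x - (mnat (n+2):ℝ)) / (2*(mnat (n+1):ℝ)) := by
    intro n x h1 h2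
    have hx : x ∈ Set.Icc (M (n+2)) (M (n+2+1)) := by
      constructor
      · rw [castM (n+2)]; exact h1
      · show x ≤ M (n+3)
        rw [castM (n+3)]; exact h2
    rw [hlin (n+2) (by omega) x hx]
    have hd : M (n+2+1) - M (n+2) = 2*(mnat (n+1):ℝ) := by
      show M (n+3) - M (n+2) = _
      rw [castM (n+3), castM (n+2)]
      have e : mnat (n+3) = mnat (n+2) + 2 * mnat (n+1) := rfl
      rw [e]; push_cast; ring
    have hfd : ((Nat.fib (n+2+1) : ℝ) - (Nat.fib (n+2):ℝ)) = (Nat.fib (n+1):ℝ) := by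
      show ((Nat.fib (n+3) : ℝ) - _) = _
      have e : Nat.fib (n+3) = Nat.fib (n+1) + Nat.fib (n+2) := Nat.fib_add_two
      rw [e]; push_cast; ring
    rw [hd, hfd, castM (n+2)]
  -- h at 0 and 1
  have h0v : h 0 = 0 := by
    have := h01 0 ⟨le_rfl, zero_le_one⟩; simpa using this
  have h1v : h 1 = 1 := by
    have := h01 1 ⟨zero_le_one, le_rfl⟩; simpa using this
  -- monotonicity on ℕ
  have hstep : ∀ k : ℕ, h (k:ℝ) ≤ h ((k+1:ℕ):ℝ) := by
    intro k
    by_cases hk : k = 0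
    · subst hk; norm_num [h0v, h1v]
    · obtain ⟨n, h1, h2⟩ := locate k (by omega)
      have hfn : (0:ℝ) ≤ (Nat.fib (n+1):ℝ) := by positivity
      have hup : (0:ℝ) < 2*(mnat (n+1):ℝ) := by
        have := mnat_pos n
        have : (1:ℝ) ≤ (mnat (n+1):ℝ) := by exact_mod_cast this
        linarith
      have e1 := heval n (k:ℝ) (by exact_mod_cast h1) (by exact_mod_cast le_of_lt h2)
      have e2 := heval n ((k+1:ℕ):ℝ) (by push_cast; exact_mod_cast Nat.le_succ_of_le h1)
        (by exact_mod_cast h2)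
      rw [e1, e2]
      have harg : ((k:ℕ):ℝ) ≤ ((k+1:ℕ):ℝ) := by push_cast; linarith
      apply (add_le_add_iff_left _).mpr
      rw [div_le_div_iff_of_pos_right hup]
      apply mul_le_mul_of_nonneg_left _ hfn
      push_cast
      linarith
  have hmono : ∀ i j : ℕ, i ≤ j → h (i:ℝ) ≤ h (j:ℝ) := by
    intro i j hij
    induction j, hij using Nat.le_induction with
    | base => exact le_rfl
    | succ m hm ih => exact le_trans ih (hstep m)
  -- common per-piece derivation packaged for each case
  have hcaseB2 : ∀ t : ℕ, 1 ≤ t → h ((t:ℝ)+1) + h (2*(t:ℝ)+1) ≤ h (4*(t:ℝ)+3) := by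
    intro t ht
    obtain ⟨n, h1, h2⟩ := locate t ht
    have hu : (1:ℝ) ≤ (mnat (n+1):ℝ) := by exact_mod_cast mnat_pos n
    have hE2 : ((mnat (n+2):ℕ):ℝ) = 2*(mnat (n+1):ℝ) + (-1:ℝ)^(n+1) := malt (n+1)
    have hE3 : ((mnat (n+3):ℕ):ℝ) = 4*(mnat (n+1):ℝ) + (-1:ℝ)^(n+1) := by
      rw [malt (n+2), hE2]; simp only [pow_succ]; ring
    have hE4 : ((mnat (n+4):ℕ):ℝ) = 8*(mnat (n+1):ℝ) + 3*(-1:ℝ)^(n+1) := by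
      rw [malt (n+3), hE3]; simp only [pow_succ]; ring
    have hE5 : ((mnat (n+5):ℕ):ℝ) = 16*(mnat (n+1):ℝ) + 5*(-1:ℝ)^(n+1) := by
      rw [malt (n+4), hE4]; simp only [pow_succ]; ring
    have he : (-1:ℝ)^(n+1) = 1 ∨ (-1:ℝ)^(n+1) = -1 := by
      rcases Nat.even_or_odd (n+1) with hp|hp
      · exact Or.inl (Even.neg_one_pow hp)
      · exact Or.inr (Odd.neg_one_pow hp)
    have he1 : (-1:ℝ) ≤ (-1:ℝ)^(n+1) := by rcases he with hh|hh <;> rw [hh] <;> norm_num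
    have he2 : (-1:ℝ)^(n+1) ≤ 1 := by rcases he with hh|hh <;> rw [hh] <;> norm_num
    have htR1 : 2*(mnat (n+1):ℝ) + (-1:ℝ)^(n+1) ≤ (t:ℝ) := by
      rw [← hE2]; exact_mod_cast h1
    have htR2 : (t:ℝ) ≤ 4*(mnat (n+1):ℝ) + (-1:ℝ)^(n+1) - 1 := by
      have hh : ((t:ℕ):ℝ) + 1 ≤ ((mnat (n+3):ℕ):ℝ) := by exact_mod_cast h2
      rw [hE3] at hh; linarith
    have hf : (1:ℝ) ≤ (Nat.fib (n+1):ℝ) := by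
      have hh : 1 ≤ Nat.fib (n+1) := by
        have := Nat.fib_pos.mpr (show 0 < n+1 by omega); omega
      exact_mod_cast hh
    have hfg : (Nat.fib (n+1):ℝ) ≤ (Nat.fib (n+2):ℝ) := by
      exact_mod_cast Nat.fib_le_fib_succ
    have hg2 : (Nat.fib (n+2):ℝ) ≤ 2*(Nat.fib (n+1):ℝ) := by
      have e : Nat.fib (n+2) = Nat.fib n + Nat.fib (n+1) := Nat.fib_add_two
      have e2 : Nat.fib n ≤ Nat.fib (n+1) := Nat.fib_le_fib_succ
      have hh : Nat.fib (n+2) ≤ 2*Nat.fib (n+1) := by omega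
      exact_mod_cast hh
    have hfe : (Nat.fib (n+3):ℝ) = (Nat.fib (n+1):ℝ) + (Nat.fib (n+2):ℝ) := by
      exact_mod_cast Nat.fib_add_two
    have hfe2 : (Nat.fib (n+4):ℝ) = (Nat.fib (n+1):ℝ) + 2*(Nat.fib (n+2):ℝ) := by
      have e : Nat.fib (n+4) = Nat.fib (n+2) + Nat.fib (n+3) := Nat.fib_add_two
      have e2 : Nat.fib (n+3) = Nat.fib (n+1) + Nat.fib (n+2) := Nat.fib_add_two
      have hh : Nat.fib (n+4) = Nat.fib (n+1) + 2*Nat.fib (n+2) := by omega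
      exact_mod_cast hh
    have hA : (-1:ℝ)^(n+1) = -1 ∨ 3*(Nat.fib (n+1):ℝ) ≤ 2*(Nat.fib (n+2):ℝ) := by
      match n with
      | 0 => exact Or.inl (by norm_num)
      | m+1 =>
        right
        have hh := fib32 m
        show 3*(Nat.fib (m+2):ℝ) ≤ 2*(Nat.fib (m+3):ℝ)
        exact_mod_cast hh
    have hv1 : h ((t:ℝ)+1) = (Nat.fib (n+2):ℝ) + (Nat.fib (n+1):ℝ)*(((t:ℝ)+1) - (2*(mnat (n+1):ℝ)+(-1:ℝ)^(n+1)))/(2*(mnat (n+1):ℝ)) := by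
      rw [heval n ((t:ℝ)+1) (by rw [hE2]; linarith) (by rw [hE3]; linarith), hE2]
    have hv2 : h (2*(t:ℝ)+1) = ((Nat.fib (n+1):ℝ)+(Nat.fib (n+2):ℝ)) + (Nat.fib (n+2):ℝ)*((2*(t:ℝ)+1) - (4*(mnat (n+1):ℝ)+(-1:ℝ)^(n+1)))/(2*(2*(mnat (n+1):ℝ)+(-1:ℝ)^(n+1))) := by
      have e : h (2*(t:ℝ)+1) = (Nat.fib (n+3):ℝ) + (Nat.fib (n+2):ℝ) * ((2*(t:ℝ)+1) - (mnat (n+3):ℝ)) / (2*(mnat (n+2):ℝ)) :=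
        heval (n+1) (2*(t:ℝ)+1) (by show (mnat (n+3):ℝ) ≤ _; rw [hE3]; linarith)
          (by show _ ≤ (mnat (n+4):ℝ); rw [hE4]; linarith)
      rw [e, hE3, hE2, hfe]
    have hv3 : h (4*(t:ℝ)+3) = ((Nat.fib (n+1):ℝ)+2*(Nat.fib (n+2):ℝ)) + ((Nat.fib (n+1):ℝ)+(Nat.fib (n+2):ℝ))*((4*(t:ℝ)+3) - (8*(mnat (n+1):ℝ)+3*(-1:ℝ)^(n+1)))/(2*(4*(mnat (n+1):ℝ)+(-1:ℝ)^(n+1))) := by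
      have e : h (4*(t:ℝ)+3) = (Nat.fib (n+4):ℝ) + (Nat.fib (n+3):ℝ) * ((4*(t:ℝ)+3) - (mnat (n+4):ℝ)) / (2*(mnat (n+3):ℝ)) :=
        heval (n+2) (4*(t:ℝ)+3) (by show (mnat (n+4):ℝ) ≤ _; rw [hE4]; linarith)
          (by show _ ≤ (mnat (n+5):ℝ); rw [hE5]; linarith)
      rw [e, hE4, hE3, hfe2, hfe]
    rw [hv1, hv2, hv3]
    exact keyB2 (t:ℝ) ((mnat (n+1):ℝ)) ((Nat.fib (n+1):ℝ)) ((Nat.fib (n+2):ℝ))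
      ((-1:ℝ)^(n+1)) hu hf hfg hg2 he hA htR1 htR2
  have hcaseA0 : ∀ s : ℕ, 1 ≤ s → h (s:ℝ) + h (4*(s:ℝ)+1) ≤ h (8*(s:ℝ)+1) := by
    intro s hs
    obtain ⟨n, h1, h2⟩ := locate s hs
    have hu : (1:ℝ) ≤ (mnat (n+1):ℝ) := by exact_mod_cast mnat_pos n
    have hE2 : ((mnat (n+2):ℕ):ℝ) = 2*(mnat (n+1):ℝ) + (-1:ℝ)^(n+1) := malt (n+1)
    have hE3 : ((mnat (n+3):ℕ):ℝ) = 4*(mnat (n+1):ℝ) + (-1:ℝ)^(n+1) := by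
      rw [malt (n+2), hE2]; simp only [pow_succ]; ring
    have hE4 : ((mnat (n+4):ℕ):ℝ) = 8*(mnat (n+1):ℝ) + 3*(-1:ℝ)^(n+1) := by
      rw [malt (n+3), hE3]; simp only [pow_succ]; ring
    have hE5 : ((mnat (n+5):ℕ):ℝ) = 16*(mnat (n+1):ℝ) + 5*(-1:ℝ)^(n+1) := by
      rw [malt (n+4), hE4]; simp only [pow_succ]; ring
    have hE6 : ((mnat (n+6):ℕ):ℝ) = 32*(mnat (n+1):ℝ) + 11*(-1:ℝ)^(n+1) := by
      rw [malt (n+5), hE5]; simp only [pow_succ]; ring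
    have he : (-1:ℝ)^(n+1) = 1 ∨ (-1:ℝ)^(n+1) = -1 := by
      rcases Nat.even_or_odd (n+1) with hp|hp
      · exact Or.inl (Even.neg_one_pow hp)
      · exact Or.inr (Odd.neg_one_pow hp)
    have he1 : (-1:ℝ) ≤ (-1:ℝ)^(n+1) := by rcases he with hh|hh <;> rw [hh] <;> norm_num
    have he2 : (-1:ℝ)^(n+1) ≤ 1 := by rcases he with hh|hh <;> rw [hh] <;> norm_num
    have htR1 : 2*(mnat (n+1):ℝ) + (-1:ℝ)^(n+1) ≤ (s:ℝ) := by
      rw [← hE2]; exact_mod_cast h1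
    have htR2 : (s:ℝ) ≤ 4*(mnat (n+1):ℝ) + (-1:ℝ)^(n+1) - 1 := by
      have hh : ((s:ℕ):ℝ) + 1 ≤ ((mnat (n+3):ℕ):ℝ) := by exact_mod_cast h2
      rw [hE3] at hh; linarith
    have hf : (1:ℝ) ≤ (Nat.fib (n+1):ℝ) := by
      have hh : 1 ≤ Nat.fib (n+1) := by
        have := Nat.fib_pos.mpr (show 0 < n+1 by omega); omega
      exact_mod_cast hh
    have hfg : (Nat.fib (n+1):ℝ) ≤ (Nat.fib (n+2):ℝ) := by
      exact_mod_cast Nat.fib_le_fib_succ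
    have hg2 : (Nat.fib (n+2):ℝ) ≤ 2*(Nat.fib (n+1):ℝ) := by
      have e : Nat.fib (n+2) = Nat.fib n + Nat.fib (n+1) := Nat.fib_add_two
      have e2 : Nat.fib n ≤ Nat.fib (n+1) := Nat.fib_le_fib_succ
      have hh : Nat.fib (n+2) ≤ 2*Nat.fib (n+1) := by omega
      exact_mod_cast hh
    have hfe : (Nat.fib (n+3):ℝ) = (Nat.fib (n+1):ℝ) + (Nat.fib (n+2):ℝ) := by
      exact_mod_cast Nat.fib_add_two
    have hfe2 : (Nat.fib (n+4):ℝ) = (Nat.fib (n+1):ℝ) + 2*(Nat.fib (n+2):ℝ) := by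
      have e : Nat.fib (n+4) = Nat.fib (n+2) + Nat.fib (n+3) := Nat.fib_add_two
      have e2 : Nat.fib (n+3) = Nat.fib (n+1) + Nat.fib (n+2) := Nat.fib_add_two
      have hh : Nat.fib (n+4) = Nat.fib (n+1) + 2*Nat.fib (n+2) := by omega
      exact_mod_cast hh
    have hfe3 : (Nat.fib (n+5):ℝ) = 2*(Nat.fib (n+1):ℝ) + 3*(Nat.fib (n+2):ℝ) := by
      have e : Nat.fib (n+5) = Nat.fib (n+3) + Nat.fib (n+4) := Nat.fib_add_two
      have e2 : Nat.fib (n+4) = Nat.fib (n+2) + Nat.fib (n+3) := Nat.fib_add_two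
      have e3 : Nat.fib (n+3) = Nat.fib (n+1) + Nat.fib (n+2) := Nat.fib_add_two
      have hh : Nat.fib (n+5) = 2*Nat.fib (n+1) + 3*Nat.fib (n+2) := by omega
      exact_mod_cast hh
    have hv1 : h (s:ℝ) = (Nat.fib (n+2):ℝ) + (Nat.fib (n+1):ℝ)*((s:ℝ) - (2*(mnat (n+1):ℝ)+(-1:ℝ)^(n+1)))/(2*(mnat (n+1):ℝ)) := by
      rw [heval n (s:ℝ) (by rw [hE2]; linarith) (by rw [hE3]; linarith), hE2]
    have hv2 : h (4*(s:ℝ)+1) = ((Nat.fib (n+1):ℝ)+2*(Nat.fib (n+2):ℝ)) + ((Nat.fib (n+1):ℝ)+(Nat.fib (n+2):ℝ))*((4*(s:ℝ)+1) - (8*(mnat (n+1):ℝ)+3*(-1:ℝ)^(n+1)))/(2*(4*(mnat (n+1):ℝ)+(-1:ℝ)^(n+1))) := by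
      have e : h (4*(s:ℝ)+1) = (Nat.fib (n+4):ℝ) + (Nat.fib (n+3):ℝ) * ((4*(s:ℝ)+1) - (mnat (n+4):ℝ)) / (2*(mnat (n+3):ℝ)) :=
        heval (n+2) (4*(s:ℝ)+1) (by show (mnat (n+4):ℝ) ≤ _; rw [hE4]; linarith)
          (by show _ ≤ (mnat (n+5):ℝ); rw [hE5]; linarith)
      rw [e, hE4, hE3, hfe2, hfe]
    rcases le_total (8*(s:ℝ)+1) (16*(mnat (n+1):ℝ)+5*(-1:ℝ)^(n+1)) with hbr|hbr
    · have hv3 : h (8*(s:ℝ)+1) = ((Nat.fib (n+1):ℝ)+2*(Nat.fib (n+2):ℝ)) + ((Nat.fib (n+1):ℝ)+(Nat.fib (n+2):ℝ))*((8*(s:ℝ)+1) - (8*(mnat (n+1):ℝ)+3*(-1:ℝ)^(n+1)))/(2*(4*(mnat (n+1):ℝ)+(-1:ℝ)^(n+1))) := by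
        have e : h (8*(s:ℝ)+1) = (Nat.fib (n+4):ℝ) + (Nat.fib (n+3):ℝ) * ((8*(s:ℝ)+1) - (mnat (n+4):ℝ)) / (2*(mnat (n+3):ℝ)) :=
          heval (n+2) (8*(s:ℝ)+1) (by show (mnat (n+4):ℝ) ≤ _; rw [hE4]; linarith)
            (by show _ ≤ (mnat (n+5):ℝ); rw [hE5]; linarith)
        rw [e, hE4, hE3, hfe2, hfe]
      rw [hv1, hv2, hv3]
      exact keyA0a (s:ℝ) ((mnat (n+1):ℝ)) ((Nat.fib (n+1):ℝ)) ((Nat.fib (n+2):ℝ))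
        ((-1:ℝ)^(n+1)) hu hf hfg hg2 he htR1 htR2 hbr
    · have hv3 : h (8*(s:ℝ)+1) = (2*(Nat.fib (n+1):ℝ)+3*(Nat.fib (n+2):ℝ)) + ((Nat.fib (n+1):ℝ)+2*(Nat.fib (n+2):ℝ))*((8*(s:ℝ)+1) - (16*(mnat (n+1):ℝ)+5*(-1:ℝ)^(n+1)))/(2*(8*(mnat (n+1):ℝ)+3*(-1:ℝ)^(n+1))) := by
        have e : h (8*(s:ℝ)+1) = (Nat.fib (n+5):ℝ) + (Nat.fib (n+4):ℝ) * ((8*(s:ℝ)+1) - (mnat (n+5):ℝ)) / (2*(mnat (n+4):ℝ)) :=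
          heval (n+3) (8*(s:ℝ)+1) (by show (mnat (n+5):ℝ) ≤ _; rw [hE5]; linarith)
            (by show _ ≤ (mnat (n+6):ℝ); rw [hE6]; linarith)
        rw [e, hE5, hE4, hfe3, hfe2]
      rw [hv1, hv2, hv3]
      exact keyA0b (s:ℝ) ((mnat (n+1):ℝ)) ((Nat.fib (n+1):ℝ)) ((Nat.fib (n+2):ℝ))
        ((-1:ℝ)^(n+1)) hu hf hfg hg2 he htR1 htR2 hbr
  have hcaseB1 : ∀ s : ℕ, 1 ≤ s → s ≠ 3 → s ≠ 4 →
      2*h (2*(s:ℝ)+1) + h ((s:ℝ)+1) ≤ h (8*(s:ℝ)+5) := by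
    intro s hs hs3 hs4
    obtain ⟨n, h1, h2⟩ := locate s hs
    have hu : (1:ℝ) ≤ (mnat (n+1):ℝ) := by exact_mod_cast mnat_pos n
    have hE2 : ((mnat (n+2):ℕ):ℝ) = 2*(mnat (n+1):ℝ) + (-1:ℝ)^(n+1) := malt (n+1)
    have hE3 : ((mnat (n+3):ℕ):ℝ) = 4*(mnat (n+1):ℝ) + (-1:ℝ)^(n+1) := by
      rw [malt (n+2), hE2]; simp only [pow_succ]; ring
    have hE4 : ((mnat (n+4):ℕ):ℝ) = 8*(mnat (n+1):ℝ) + 3*(-1:ℝ)^(n+1) := by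
      rw [malt (n+3), hE3]; simp only [pow_succ]; ring
    have hE5 : ((mnat (n+5):ℕ):ℝ) = 16*(mnat (n+1):ℝ) + 5*(-1:ℝ)^(n+1) := by
      rw [malt (n+4), hE4]; simp only [pow_succ]; ring
    have hE6 : ((mnat (n+6):ℕ):ℝ) = 32*(mnat (n+1):ℝ) + 11*(-1:ℝ)^(n+1) := by
      rw [malt (n+5), hE5]; simp only [pow_succ]; ring
    have he : (-1:ℝ)^(n+1) = 1 ∨ (-1:ℝ)^(n+1) = -1 := by
      rcases Nat.even_or_odd (n+1) with hp|hp
      · exact Or.inl (Even.neg_one_pow hp)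
      · exact Or.inr (Odd.neg_one_pow hp)
    have he1 : (-1:ℝ) ≤ (-1:ℝ)^(n+1) := by rcases he with hh|hh <;> rw [hh] <;> norm_num
    have he2 : (-1:ℝ)^(n+1) ≤ 1 := by rcases he with hh|hh <;> rw [hh] <;> norm_num
    have htR1 : 2*(mnat (n+1):ℝ) + (-1:ℝ)^(n+1) ≤ (s:ℝ) := by
      rw [← hE2]; exact_mod_cast h1
    have htR2 : (s:ℝ) ≤ 4*(mnat (n+1):ℝ) + (-1:ℝ)^(n+1) - 1 := by
      have hh : ((s:ℕ):ℝ) + 1 ≤ ((mnat (n+3):ℕ):ℝ) := by exact_mod_cast h2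
      rw [hE3] at hh; linarith
    have hf : (1:ℝ) ≤ (Nat.fib (n+1):ℝ) := by
      have hh : 1 ≤ Nat.fib (n+1) := by
        have := Nat.fib_pos.mpr (show 0 < n+1 by omega); omega
      exact_mod_cast hh
    have hfg : (Nat.fib (n+1):ℝ) ≤ (Nat.fib (n+2):ℝ) := by
      exact_mod_cast Nat.fib_le_fib_succ
    have hg2 : (Nat.fib (n+2):ℝ) ≤ 2*(Nat.fib (n+1):ℝ) := by
      have e : Nat.fib (n+2) = Nat.fib n + Nat.fib (n+1) := Nat.fib_add_two
      have e2 : Nat.fib n ≤ Nat.fib (n+1) := Nat.fib_le_fib_succ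
      have hh : Nat.fib (n+2) ≤ 2*Nat.fib (n+1) := by omega
      exact_mod_cast hh
    have hfe : (Nat.fib (n+3):ℝ) = (Nat.fib (n+1):ℝ) + (Nat.fib (n+2):ℝ) := by
      exact_mod_cast Nat.fib_add_two
    have hfe2 : (Nat.fib (n+4):ℝ) = (Nat.fib (n+1):ℝ) + 2*(Nat.fib (n+2):ℝ) := by
      have e : Nat.fib (n+4) = Nat.fib (n+2) + Nat.fib (n+3) := Nat.fib_add_two
      have e2 : Nat.fib (n+3) = Nat.fib (n+1) + Nat.fib (n+2) := Nat.fib_add_two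
      have hh : Nat.fib (n+4) = Nat.fib (n+1) + 2*Nat.fib (n+2) := by omega
      exact_mod_cast hh
    have hfe3 : (Nat.fib (n+5):ℝ) = 2*(Nat.fib (n+1):ℝ) + 3*(Nat.fib (n+2):ℝ) := by
      have e : Nat.fib (n+5) = Nat.fib (n+3) + Nat.fib (n+4) := Nat.fib_add_two
      have e2 : Nat.fib (n+4) = Nat.fib (n+2) + Nat.fib (n+3) := Nat.fib_add_two
      have e3 : Nat.fib (n+3) = Nat.fib (n+1) + Nat.fib (n+2) := Nat.fib_add_two
      have hh : Nat.fib (n+5) = 2*Nat.fib (n+1) + 3*Nat.fib (n+2) := by omega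
      exact_mod_cast hh
    have hn1 : n ≠ 1 := by
      rintro rfl
      have v3 : mnat 3 = 3 := by simp [mnat]
      have v4 : mnat 4 = 5 := by simp [mnat]
      have w1 : mnat 3 ≤ s := h1
      have w2 : s < mnat 4 := h2
      omega
    have hB : (-1:ℝ)^(n+1) = 1 → 3*(Nat.fib (n+1):ℝ) + 6*(mnat (n+1):ℝ)*(Nat.fib (n+1):ℝ) ≤ 4*(mnat (n+1):ℝ)*(Nat.fib (n+2):ℝ) := by
      intro hee
      rcases Nat.even_or_odd n with hp|hp
      · exfalso
        have : (-1:ℝ)^(n+1) = -1 := Odd.neg_one_pow (by exact Even.add_one hp)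
        rw [this] at hee; norm_num at hee
      · have hn3 : 3 ≤ n := by
          rcases hp with ⟨c, hc⟩
          omega
        have hw := fibW (n+1) (by omega)
        exact_mod_cast hw
    have hA : (-1:ℝ)^(n+1) = -1 → ((mnat (n+1):ℝ) = 1 ∨ 3*(Nat.fib (n+1):ℝ) ≤ 2*(Nat.fib (n+2):ℝ)) := by
      intro _
      match n with
      | 0 => exact Or.inl (by norm_num [mnat])
      | m+1 =>
        right
        have hh := fib32 m
        show 3*(Nat.fib (m+2):ℝ) ≤ 2*(Nat.fib (m+3):ℝ)
        exact_mod_cast hh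
    have hv1 : h (2*(s:ℝ)+1) = ((Nat.fib (n+1):ℝ)+(Nat.fib (n+2):ℝ)) + (Nat.fib (n+2):ℝ)*((2*(s:ℝ)+1) - (4*(mnat (n+1):ℝ)+(-1:ℝ)^(n+1)))/(2*(2*(mnat (n+1):ℝ)+(-1:ℝ)^(n+1))) := by
      have e : h (2*(s:ℝ)+1) = (Nat.fib (n+3):ℝ) + (Nat.fib (n+2):ℝ) * ((2*(s:ℝ)+1) - (mnat (n+3):ℝ)) / (2*(mnat (n+2):ℝ)) :=
        heval (n+1) (2*(s:ℝ)+1) (by show (mnat (n+3):ℝ) ≤ _; rw [hE3]; linarith)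
          (by show _ ≤ (mnat (n+4):ℝ); rw [hE4]; linarith)
      rw [e, hE3, hE2, hfe]
    have hv1' : 2*h (2*(s:ℝ)+1) = 2*((Nat.fib (n+1):ℝ)+(Nat.fib (n+2):ℝ)) + (2*(Nat.fib (n+2):ℝ))*((2*(s:ℝ)+1) - (4*(mnat (n+1):ℝ)+(-1:ℝ)^(n+1)))/(2*(2*(mnat (n+1):ℝ)+(-1:ℝ)^(n+1))) := by
      rw [hv1]; ring
    have hv2 : h ((s:ℝ)+1) = (Nat.fib (n+2):ℝ) + (Nat.fib (n+1):ℝ)*(((s:ℝ)+1) - (2*(mnat (n+1):ℝ)+(-1:ℝ)^(n+1)))/(2*(mnat (n+1):ℝ)) := by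
      rw [heval n ((s:ℝ)+1) (by rw [hE2]; linarith) (by rw [hE3]; linarith), hE2]
    have hv3 : h (8*(s:ℝ)+5) = (2*(Nat.fib (n+1):ℝ)+3*(Nat.fib (n+2):ℝ)) + ((Nat.fib (n+1):ℝ)+2*(Nat.fib (n+2):ℝ))*((8*(s:ℝ)+5) - (16*(mnat (n+1):ℝ)+5*(-1:ℝ)^(n+1)))/(2*(8*(mnat (n+1):ℝ)+3*(-1:ℝ)^(n+1))) := by
      have e : h (8*(s:ℝ)+5) = (Nat.fib (n+5):ℝ) + (Nat.fib (n+4):ℝ) * ((8*(s:ℝ)+5) - (mnat (n+5):ℝ)) / (2*(mnat (n+4):ℝ)) :=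
        heval (n+3) (8*(s:ℝ)+5) (by show (mnat (n+5):ℝ) ≤ _; rw [hE5]; linarith)
          (by show _ ≤ (mnat (n+6):ℝ); rw [hE6]; linarith)
      rw [e, hE5, hE4, hfe3, hfe2]
    rw [hv1', hv2, hv3]
    exact keyB1b (s:ℝ) ((mnat (n+1):ℝ)) ((Nat.fib (n+1):ℝ)) ((Nat.fib (n+2):ℝ))
      ((-1:ℝ)^(n+1)) hu hf hfg hg2 he hB hA htR1 htR2
  -- small numeric values
  have m2 : mnat 2 = 1 := by simp [mnat]
  have m3 : mnat 3 = 3 := by simp [mnat]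
  have m4 : mnat 4 = 5 := by simp [mnat]
  have m5 : mnat 5 = 11 := by simp [mnat]
  have m6 : mnat 6 = 21 := by simp [mnat]
  have m7 : mnat 7 = 43 := by simp [mnat]
  have f2 : Nat.fib 2 = 1 := by decide
  have f3 : Nat.fib 3 = 2 := by decide
  have f4 : Nat.fib 4 = 3 := by decide
  have f5 : Nat.fib 5 = 5 := by decide
  have f6 : Nat.fib 6 = 8 := by decide
  have a2 : a 2 = 1 := by simpa [ha1] using haeven 1 le_rfl
  have a3 : a 3 = 2 := by simpa [ha1, a2] using haodd 1 le_rfl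
  have a4 : a 4 = 1 := by simpa [a2] using haeven 2 (by norm_num)
  have a5 : a 5 = 3 := by simpa [a2, a3] using haodd 2 (by norm_num)
  have a7 : a 7 = 3 := by simpa [a3, a4] using haodd 3 (by norm_num)
  have a8 : a 8 = 1 := by simpa [a4] using haeven 4 (by norm_num)
  have a9 : a 9 = 4 := by simpa [a4, a5] using haodd 4 (by norm_num)
  have a10 : a 10 = 3 := by simpa [a5] using haeven 5 (by norm_num)
  have a14 : a 14 = 3 := by simpa [a7] using haeven 7 (by norm_num)
  have a15 : a 15 = 4 := by simpa [a7, a8] using haodd 7 (by norm_num)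
  have a18 : a 18 = 4 := by simpa [a9] using haeven 9 (by norm_num)
  have a19 : a 19 = 7 := by simpa [a9, a10] using haodd 9 (by norm_num)
  have a29 : a 29 = 7 := by simpa [a14, a15] using haodd 14 (by norm_num)
  have a37 : a 37 = 11 := by simpa [a18, a19] using haodd 18 (by norm_num)
  intro k
  induction k using Nat.strong_induction_on with
  | _ k ih =>
  rcases Nat.even_or_odd k with ⟨n, hk⟩ | ⟨n, hk⟩
  · -- even
    by_cases hn0 : n = 0
    · have hk0 : k = 0 := by omega
      rw [hk0, ha0]; norm_num [h0v]
    · have hae : a k = a n := by rw [show k = 2*n by omega]; exact haeven n (by omega)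
      have ihn := ih n (by omega)
      have hmn := hmono n k (by omega)
      rw [hae]; exact le_trans ihn hmn
  · -- odd : k = 2n+1
    by_cases hn0 : n = 0
    · have hk1 : k = 1 := by omega
      rw [hk1, ha1]; norm_num [h1v]
    · rcases Nat.even_or_odd n with ⟨r, hr⟩ | ⟨r, hr⟩
      · -- n even, k = 4r+1
        rcases Nat.even_or_odd r with ⟨q, hq⟩ | ⟨q, hq⟩
        · -- r = q+q : k = 8q+1
          have hs1 : 1 ≤ q := by omega
          have e5 : a (4*q) = a q := by
            rw [show (4:ℕ)*q = 2*(2*q) by ring, haeven (2*q) (by omega), haeven q (by omega)]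
          have hav : a k = a q + a (4*q+1) := by
            rw [show k = 2*(4*q)+1 by omega, haodd (4*q) (by omega), e5]
          have ih1 := ih q (by omega)
          have ih2 := ih (4*q+1) (by omega)
          have c1 : ((4*q+1:ℕ):ℝ) = 4*(q:ℝ)+1 := by push_cast; ring
          rw [c1] at ih2
          have hk8 : ((k:ℕ):ℝ) = 8*(q:ℝ)+1 := by
            rw [show k = 8*q+1 by omega]; push_cast; ring
          rw [hav]; push_cast; rw [hk8]
          have := hcaseA0 q hs1
          linarith
        · -- r = 2q+1 : k = 8q+5
          by_cases hq0 : q = 0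
          · have hk5 : k = 5 := by omega
            rw [hk5, a5]
            have e : h ((5:ℕ):ℝ) = (Nat.fib 4:ℝ) + (Nat.fib 3:ℝ) * (((5:ℕ):ℝ) - (mnat 4:ℝ))/(2*(mnat 3:ℝ)) :=
              heval 2 ((5:ℕ):ℝ) (by rw [m4])
                (by rw [m5]; exact_mod_cast (by norm_num : (5:ℕ) ≤ 11))
            rw [e, m3, m4, f3, f4]; norm_num
          · by_cases hq3 : q = 3
            · have hk29 : k = 29 := by omega
              rw [hk29, a29]
              have e : h ((29:ℕ):ℝ) = (Nat.fib 6:ℝ) + (Nat.fib 5:ℝ) * (((29:ℕ):ℝ) - (mnat 6:ℝ))/(2*(mnat 5:ℝ)) :=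
                heval 4 ((29:ℕ):ℝ) (by rw [m6]; exact_mod_cast (by norm_num : (21:ℕ) ≤ 29))
                  (by rw [m7]; exact_mod_cast (by norm_num : (29:ℕ) ≤ 43))
              rw [e, m5, m6, f5, f6]; norm_num
            · by_cases hq4 : q = 4
              · have hk37 : k = 37 := by omega
                rw [hk37, a37]
                have e : h ((37:ℕ):ℝ) = (Nat.fib 6:ℝ) + (Nat.fib 5:ℝ) * (((37:ℕ):ℝ) - (mnat 6:ℝ))/(2*(mnat 5:ℝ)) :=
                  heval 4 ((37:ℕ):ℝ) (by rw [m6]; exact_mod_cast (by norm_num : (21:ℕ) ≤ 37))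
                    (by rw [m7]; exact_mod_cast (by norm_num : (37:ℕ) ≤ 43))
                rw [e, m5, m6, f5, f6]; norm_num
              · have hs1 : 1 ≤ q := by omega
                have e1 : a (4*q+2) = a (2*q+1) := by
                  rw [show 4*q+2 = 2*(2*q+1) by ring, haeven (2*q+1) (by omega)]
                have e2 : a (4*q+3) = a (2*q+1) + a (q+1) := by
                  rw [show 4*q+3 = 2*(2*q+1)+1 by ring, haodd (2*q+1) (by omega),
                    show 2*q+1+1 = 2*(q+1) by ring, haeven (q+1) (by omega)]
                have hav : a k = a (2*q+1) + (a (2*q+1) + a (q+1)) := by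
                  rw [show k = 2*(4*q+2)+1 by omega, haodd (4*q+2) (by omega), e1, e2]
                have ih1 := ih (2*q+1) (by omega)
                have ih2 := ih (q+1) (by omega)
                have c1 : ((2*q+1:ℕ):ℝ) = 2*(q:ℝ)+1 := by push_cast; ring
                have c2 : ((q+1:ℕ):ℝ) = (q:ℝ)+1 := by push_cast; ring
                rw [c1] at ih1; rw [c2] at ih2
                have hk8 : ((k:ℕ):ℝ) = 8*(q:ℝ)+5 := by
                  rw [show k = 8*q+5 by omega]; push_cast; ring
                rw [hav]; push_cast; rw [hk8]
                have := hcaseB1 q hs1 hq3 hq4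
                linarith
      · -- n odd : n = 2t+1, k = 4t+3
        obtain ⟨t, ht⟩ : ∃ t, n = 2*t+1 := ⟨r, hr⟩
        by_cases ht0 : t = 0
        · have hk3 : k = 3 := by omega
          rw [hk3, a3]
          have e : h ((3:ℕ):ℝ) = (Nat.fib 3:ℝ) + (Nat.fib 2:ℝ) * (((3:ℕ):ℝ) - (mnat 3:ℝ))/(2*(mnat 2:ℝ)) :=
            heval 1 ((3:ℕ):ℝ) (by rw [m3])
              (by rw [m4]; exact_mod_cast (by norm_num : (3:ℕ) ≤ 5))
          rw [e, m2, m3, f2, f3]; norm_num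
        · have e2 : a (2*(2*t+1)+1) = a (2*t+1) + a (t+1) := by
            rw [haodd (2*t+1) (by omega), show 2*t+1+1 = 2*(t+1) by ring,
              haeven (t+1) (by omega)]
          have hav : a k = a (2*t+1) + a (t+1) := by
            rw [show k = 2*(2*t+1)+1 by omega, e2]
          have ih1 := ih (2*t+1) (by omega)
          have ih2 := ih (t+1) (by omega)
          have c1 : ((2*t+1:ℕ):ℝ) = 2*(t:ℝ)+1 := by push_cast; ring
          have c2 : ((t+1:ℕ):ℝ) = (t:ℝ)+1 := by push_cast; ring
          rw [c1] at ih1; rw [c2] at ih2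
          have hk4 : ((k:ℕ):ℝ) = 4*(t:ℝ)+3 := by
            rw [show k = 4*t+3 by omega]; push_cast; ring
          rw [hav]; push_cast; rw [hk4]
          have := hcaseB2 t (by omega)
          linarith
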